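/- Each augmentation term of the influence function has mean zero: fix an integer k ≥ 1, adopt the core setup, and let Y_j be integrable. Then for every m ∈ {1,…,k}, E_P[ 1_{B_m} g_m^{−1} (Q^{j,k,m+1} − Q^{j,k,m}) ] = 0, for any choice of versions in the conditional-expectation recursion. -/

import Mathlib

open MeasureTheory ProbabilityTheory

lemma aug_ae_cond_iff {Ω : Type*} [MeasurableSpace Ω] (P : Measure Ω) [IsFiniteMeasure P]
    (s : Set Ω) {q : Ω → Prop} :
    (∀ᵐ ω ∂P[|s], q ω) ↔ ∀ᵐ ω ∂P.restrict s, q ω := by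
  show (∀ᵐ ω ∂((P s)⁻¹ • P.restrict s), q ω) ↔ _
  simp [ae_iff, ENNReal.inv_ne_zero.mpr (measure_ne_top P s)]

lemma aug_integrable_cond_iff {Ω : Type*} [MeasurableSpace Ω] (P : Measure Ω) [IsFiniteMeasure P]
    (s : Set Ω) (hs : P s ≠ 0) {f : Ω → ℝ} :
    Integrable f (P[|s]) ↔ Integrable f (P.restrict s) := by
  show Integrable f ((P s)⁻¹ • P.restrict s) ↔ _
  exact integrable_smul_measure (ENNReal.inv_ne_zero.mpr (measure_ne_top P s))
    (ENNReal.inv_ne_top.mpr hs)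

/-- Each augmentation term of the influence function has mean zero:
under the core setup with integrable `Y = Y_j` and any choice of versions
`Q m` of the iterated conditional expectations (`Q (k+1) = Y`,
`Q m` a `𝒲 m`-measurable version of `E[Q (m+1) | 𝒲 m]` under `P[|B m]`),
for every `1 ≤ m ≤ k`, `E_P[1_{B m} (g m)⁻¹ (Q (m+1) - Q m)] = 0`. -/
theorem augmentation_term_mean_zero
    {Ω : Type*} [inst : MeasurableSpace Ω] (P : Measure Ω) [IsProbabilityMeasure P]
    (k : ℕ) (hk : 1 ≤ k)
    (B : ℕ → Set Ω)
    (hBmeas : ∀ m, m ≤ k → MeasurableSet (B m))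
    (hBmono : ∀ m, m < k → B (m + 1) ⊆ B m)
    (hB0 : P (B 0) = 1)
    (hBk : 0 < P (B k))
    (𝒲 : ℕ → MeasurableSpace Ω)
    (h𝒲le : ∀ m, 1 ≤ m → m ≤ k → 𝒲 m ≤ inst)
    (h𝒲mono : ∀ m, 1 ≤ m → m < k → 𝒲 m ≤ 𝒲 (m + 1))
    (ε : ℝ) (hε : 0 < ε)
    (p : ℕ → Ω → ℝ)
    (hpmeas : ∀ m, 1 ≤ m → m ≤ k → Measurable[𝒲 m] (p m))
    (hpver : ∀ m, 1 ≤ m → m ≤ k →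
      p m =ᵐ[P[|B (m - 1)]] (P[|B (m - 1)])[(B m).indicator (fun _ => (1 : ℝ))|𝒲 m])
    (hppos : ∀ m, 1 ≤ m → m ≤ k → ∀ᵐ ω ∂P, ε ≤ p m ω)
    (g : ℕ → Ω → ℝ)
    (hg : ∀ m ω, g m ω = ∏ s ∈ Finset.Icc 1 m, p s ω)
    (Y : Ω → ℝ) (hYint : Integrable Y P)
    (Q : ℕ → Ω → ℝ)
    (hQtop : Q (k + 1) = Y)
    (hQmeas : ∀ m, 1 ≤ m → m ≤ k → Measurable[𝒲 m] (Q m))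
    (hQver : ∀ m, 1 ≤ m → m ≤ k → Q m =ᵐ[P[|B m]] (P[|B m])[Q (m + 1)|𝒲 m])
    :
    ∀ m, 1 ≤ m → m ≤ k →
      ∫ ω in B m, (g m ω)⁻¹ * (Q (m + 1) ω - Q m ω) ∂P = 0 := by
  intro m hm1 hmk
  -- the events form a decreasing chain
  have hchain : ∀ a b : ℕ, a ≤ b → b ≤ k → B b ⊆ B a := by
    intro a b hab hbk
    induction b with
    | zero => simp [Nat.le_zero.mp hab]
    | succ n ih =>
      rcases Nat.lt_or_ge a (n + 1) with h | h
      · exact (hBmono n (by omega)).trans (ih (by omega) (by omega))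
      · have : a = n + 1 := le_antisymm hab h
        simp [this]
  have hBmpos : P (B m) ≠ 0 := (lt_of_lt_of_le hBk (measure_mono (hchain m k hmk le_rfl))).ne'
  have hgm𝒲 : 𝒲 m ≤ inst := h𝒲le m hm1 hmk
  haveI hprob : IsProbabilityMeasure (P[|B m]) := cond_isProbabilityMeasure hBmpos
  -- σ-algebra chain
  have hWchain : ∀ a b : ℕ, 1 ≤ a → a ≤ b → b ≤ k → 𝒲 a ≤ 𝒲 b := by
    intro a b ha1 hab hbk
    induction b with
    | zero => omega
    | succ n ih =>
      rcases Nat.lt_or_ge a (n + 1) with h | h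
      · exact le_trans (ih (by omega) (by omega)) (h𝒲mono n (by omega) (by omega))
      · have : a = n + 1 := le_antisymm hab h
        simp [this]
  have h𝒲chain : ∀ s, 1 ≤ s → s ≤ m → 𝒲 s ≤ 𝒲 m :=
    fun s h1 h2 => hWchain s m h1 h2 hmk
  -- measurability of g m
  have hgmdef : g m = fun ω => ∏ s ∈ Finset.Icc 1 m, p s ω := funext (hg m)
  have hgmeas : Measurable[𝒲 m] (g m) := by
    rw [hgmdef]
    refine Finset.measurable_prod _ fun s hs => ?_
    obtain ⟨h1, h2⟩ := Finset.mem_Icc.mp hs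
    exact (hpmeas s h1 (h2.trans hmk)).mono (h𝒲chain s h1 h2) le_rfl
  have hgmeasP : Measurable (g m) := hgmeas.mono hgm𝒲 le_rfl
  -- lower bound for g m
  have hplow : ∀ᵐ ω ∂P, ∀ s, s ∈ Finset.Icc 1 m → ε ≤ p s ω := by
    rw [ae_all_iff]
    intro s
    by_cases hs : s ∈ Finset.Icc 1 m
    · obtain ⟨h1, h2⟩ := Finset.mem_Icc.mp hs
      filter_upwards [hppos s h1 (h2.trans hmk)] with ω hω _
      exact hω
    · filter_upwards with ω h
      exact absurd h hs
  have hεm : (0:ℝ) < ε ^ m := pow_pos hε m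
  have hglow : ∀ᵐ ω ∂P, ε ^ m ≤ g m ω := by
    filter_upwards [hplow] with ω hω
    rw [hg]
    calc ε ^ m = ∏ _s ∈ Finset.Icc 1 m, ε := by
          rw [Finset.prod_const, Nat.card_Icc]; norm_num
      _ ≤ ∏ s ∈ Finset.Icc 1 m, p s ω := Finset.prod_le_prod (fun s _ => hε.le) hω
  have hginv : ∀ᵐ ω ∂P, ‖(g m ω)⁻¹‖ ≤ (ε ^ m)⁻¹ := by
    filter_upwards [hglow] with ω hω
    have hg0 : 0 < g m ω := hεm.trans_le hω
    rw [Real.norm_eq_abs, abs_of_nonneg (inv_nonneg.mpr hg0.le)]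
    exact inv_anti₀ hεm hω
  -- upper bound for g m on B m
  have hpupper : ∀ᵐ ω ∂P.restrict (B m), ∀ s, s ∈ Finset.Icc 1 m → p s ω ≤ 1 := by
    rw [ae_all_iff]
    intro s
    by_cases hs : s ∈ Finset.Icc 1 m
    · obtain ⟨h1, h2⟩ := Finset.mem_Icc.mp hs
      have hsk : s ≤ k := h2.trans hmk
      have hs1k : s - 1 ≤ k := le_trans (Nat.sub_le s 1) hsk
      have hBs0 : P (B (s - 1)) ≠ 0 :=
        (lt_of_lt_of_le hBk (measure_mono (hchain (s - 1) k hs1k le_rfl))).ne'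
      haveI := cond_isProbabilityMeasure (μ := P) hBs0
      have hind : ∀ ω, (B s).indicator (fun _ => (1:ℝ)) ω ≤ (1:ℝ) := by
        intro ω
        by_cases h : ω ∈ B s <;> simp [h]
      have hindint : Integrable ((B s).indicator fun _ => (1:ℝ)) (P[|B (s - 1)]) :=
        (integrable_const (1:ℝ)).indicator (hBmeas s hsk)
      have hmono := condExp_mono (μ := P[|B (s - 1)]) (m := 𝒲 s) hindint
        (integrable_const (1:ℝ)) (Filter.Eventually.of_forall hind)
      have hconst := condExp_const (μ := P[|B (s - 1)]) (h𝒲le s h1 hsk) (1:ℝ)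
      have h1' : ∀ᵐ ω ∂P[|B (s - 1)], p s ω ≤ 1 := by
        filter_upwards [hpver s h1 hsk, hmono] with ω he hle
        rw [he]
        exact hle.trans (le_of_eq (congrFun hconst ω))
      have h2' : ∀ᵐ ω ∂P.restrict (B (s - 1)), p s ω ≤ 1 :=
        (aug_ae_cond_iff P (B (s - 1))).mp h1'
      have h3' : ∀ᵐ ω ∂P.restrict (B m), p s ω ≤ 1 :=
        ae_restrict_of_ae_restrict_of_subset (hchain (s - 1) m (by omega) hmk) h2'
      filter_upwards [h3'] with ω hω _
      exact hω
    · filter_upwards with ω h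
      exact absurd h hs
  have hgupper : ∀ᵐ ω ∂P.restrict (B m), ‖g m ω‖ ≤ 1 := by
    filter_upwards [hpupper, ae_restrict_of_ae hplow] with ω h1 h2
    rw [hg, Real.norm_eq_abs,
      abs_of_nonneg (Finset.prod_nonneg fun s hs => hε.le.trans (h2 s hs))]
    exact Finset.prod_le_one (fun s hs => hε.le.trans (h2 s hs)) h1
  -- strong measurability of Q (m+1)
  have hXaesm : AEStronglyMeasurable (Q (m + 1)) P := by
    rcases eq_or_lt_of_le hmk with he | hlt
    · rw [he, hQtop]
      exact hYint.1
    · exact ((hQmeas (m + 1) (by omega) hlt).mono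
        (h𝒲le (m + 1) (by omega) hlt) le_rfl).aestronglyMeasurable
  by_cases hint : Integrable (Q (m + 1)) (P[|B m])
  · -- integrable case: genuine argument
    have hfsm : StronglyMeasurable[𝒲 m] (fun ω => (g m ω)⁻¹) :=
      (hgmeas.inv).stronglyMeasurable
    have hfbddμ : ∀ᵐ ω ∂P[|B m], ‖(g m ω)⁻¹‖ ≤ (ε ^ m)⁻¹ :=
      hginv.filter_mono cond_absolutelyContinuous.ae_le
    have hfaesm : AEStronglyMeasurable (fun ω => (g m ω)⁻¹) (P[|B m]) :=
      (hgmeasP.inv).aestronglyMeasurable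
    have hfX : Integrable (fun ω => (g m ω)⁻¹ * Q (m + 1) ω) (P[|B m]) :=
      hint.bdd_mul hfaesm hfbddμ
    have hQmint : Integrable (Q m) (P[|B m]) :=
      integrable_condExp.congr (hQver m hm1 hmk).symm
    have hfQm : Integrable (fun ω => (g m ω)⁻¹ * Q m ω) (P[|B m]) :=
      hQmint.bdd_mul hfaesm hfbddμ
    have hpull :=
      condExp_mul_of_stronglyMeasurable_left (μ := P[|B m]) hfsm
        (by simpa [Pi.mul_def] using hfX) hint
    have h1 : ∫ ω, (g m ω)⁻¹ * Q (m + 1) ω ∂(P[|B m])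
        = ∫ ω, (g m ω)⁻¹ * Q m ω ∂(P[|B m]) := by
      have e1 := integral_condExp (μ := P[|B m]) hgm𝒲
        (f := (fun ω => (g m ω)⁻¹) * Q (m + 1))
      have e2 := integral_congr_ae hpull
      have e3 : ((fun ω => (g m ω)⁻¹) * (P[|B m])[Q (m + 1)|𝒲 m])
          =ᵐ[P[|B m]] fun ω => (g m ω)⁻¹ * Q m ω := by
        filter_upwards [hQver m hm1 hmk] with ω hω
        simp [Pi.mul_apply, hω]
      calc ∫ ω, (g m ω)⁻¹ * Q (m + 1) ω ∂(P[|B m])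
          = ∫ ω, ((fun ω => (g m ω)⁻¹) * Q (m + 1)) ω ∂(P[|B m]) := rfl
        _ = ∫ ω, ((P[|B m])[(fun ω => (g m ω)⁻¹) * Q (m + 1)|𝒲 m]) ω ∂(P[|B m]) := e1.symm
        _ = ∫ ω, ((fun ω => (g m ω)⁻¹) * (P[|B m])[Q (m + 1)|𝒲 m]) ω ∂(P[|B m]) := e2
        _ = ∫ ω, (g m ω)⁻¹ * Q m ω ∂(P[|B m]) := integral_congr_ae e3
    have hI : ∫ ω, (g m ω)⁻¹ * (Q (m + 1) ω - Q m ω) ∂(P[|B m]) = 0 := by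
      simp_rw [mul_sub]
      rw [integral_sub hfX hfQm, h1, sub_self]
    have hμeq : (P[|B m]) = (P (B m))⁻¹ • P.restrict (B m) := rfl
    rw [hμeq, integral_smul_measure] at hI
    have hc : ((P (B m))⁻¹).toReal ≠ 0 :=
      ENNReal.toReal_ne_zero.mpr
        ⟨ENNReal.inv_ne_zero.mpr (measure_ne_top P _), ENNReal.inv_ne_top.mpr hBmpos⟩
    rcases mul_eq_zero.mp hI with h | h
    · exact absurd h hc
    · exact h
  · -- non-integrable case: the integrand is not integrable, so the integral is 0
    have hQm0 : Q m =ᵐ[P[|B m]] 0 := by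
      have h := hQver m hm1 hmk
      rw [condExp_of_not_integrable hint] at h
      exact h
    have hQm0' : ∀ᵐ ω ∂P.restrict (B m), Q m ω = (0:ℝ) :=
      (aug_ae_cond_iff P (B m)).mp hQm0
    have heq : (fun ω => (g m ω)⁻¹ * (Q (m + 1) ω - Q m ω))
        =ᵐ[P.restrict (B m)] fun ω => (g m ω)⁻¹ * Q (m + 1) ω := by
      filter_upwards [hQm0'] with ω hω
      simp [hω]
    rw [integral_congr_ae heq]
    refine integral_undef fun Hint => ?_
    have hXr : Integrable (Q (m + 1)) (P.restrict (B m)) := by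
      have h2 : Integrable (fun ω => g m ω * ((g m ω)⁻¹ * Q (m + 1) ω))
          (P.restrict (B m)) :=
        Hint.bdd_mul hgmeasP.aestronglyMeasurable.restrict hgupper
      refine h2.congr ?_
      filter_upwards [ae_restrict_of_ae hglow] with ω hω
      rw [← mul_assoc, mul_inv_cancel₀ (hεm.trans_le hω).ne', one_mul]
    exact hint ((aug_integrable_cond_iff P (B m) hBmpos).mpr hXr)
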